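/- arXiv:1101.0761 — 2 statements merged into one kernel-verified Lean document; each statement's English description precedes it below -/
import Mathlib

section
/- Let (C, R) be a weakly reversible chemical reaction network on N species and let x : [0,∞) → ℝ^N_{>0} be a trajectory of the associated non-autonomous mass-action system with bounded kinetics. Suppose x(t) remains bounded and dist(x(t), ∂ℝ^N_{≥0}) → 0 as t → ∞ (equivalently, min_i x_i(t) → 0). Then at least one of the following holds: (C1) for every x̄ ∈ ℝ^N_{>0} there exists T > 0 such that for all t > T, Σ_{y_k → y_k' ∈ R} κ_k(t) x(t)^{y_k} (y_k' − y_k) · (ln x(t) − ln x̄) < 0, where ln is applied componentwise; or (C2) there exists a sequence of times t_n → ∞ such that x_n := x(t_n) converges to a point z on the boundary of ℝ^N_{≥0}, the set of complexes C is partitioned along (x_n) with tiers T_1, …, T_P, and the highest tier T_1 is a union of linkage classes of (C, R). -/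
open Filter

/-- A chemical reaction network on `N` species: a finite set `C ⊆ ℤ^N_{≥0}` of complexes
and a finite set `R` of reactions `y → y'` with `y ≠ y'`, both endpoints complexes,
such that every complex takes part in at least one reaction. -/
def IsNetwork {N : ℕ} (C : Finset (Fin N → ℕ)) (R : Finset ((Fin N → ℕ) × (Fin N → ℕ))) : Prop :=
  (∀ r ∈ R, r.1 ∈ C ∧ r.2 ∈ C ∧ r.1 ≠ r.2) ∧ (∀ y ∈ C, ∃ r ∈ R, r.1 = y ∨ r.2 = y)

/-- Directed edge of the reaction diagram. -/
def dirStep {N : ℕ} (R : Finset ((Fin N → ℕ) × (Fin N → ℕ))) (a b : Fin N → ℕ) : Prop :=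
  (a, b) ∈ R

/-- Undirected edge of the reaction diagram. -/
def symStep {N : ℕ} (R : Finset ((Fin N → ℕ) × (Fin N → ℕ))) (a b : Fin N → ℕ) : Prop :=
  (a, b) ∈ R ∨ (b, a) ∈ R

/-- A network is weakly reversible when each linkage class (connected component of the
reaction diagram, ignoring directions) is strongly connected as a directed graph:
whenever `b` is reachable from `a` ignoring directions, it is reachable along
directed reactions. -/
def WeaklyReversible {N : ℕ} (R : Finset ((Fin N → ℕ) × (Fin N → ℕ))) : Prop :=
  ∀ a b, Relation.ReflTransGen (symStep R) a b → Relation.ReflTransGen (dirStep R) a b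

/-- The mass-action monomial `x^y = ∏ i, (x i)^(y i)` (with the convention `0^0 = 1`). -/
noncomputable def monom {N : ℕ} (x : Fin N → ℝ) (y : Fin N → ℕ) : ℝ := ∏ i, x i ^ y i

/-- A complex, viewed as a real vector. -/
def cv {N : ℕ} (y : Fin N → ℕ) : Fin N → ℝ := fun i => (y i : ℝ)

/-- The set of complexes `C` is partitioned along the sequence `x` into the ordered
tiers `T 0 ≻ T 1 ≻ ⋯ ≻ T (P-1)` with constant `M > 1`. -/
def PartitionedAlong {N P : ℕ} (C : Finset (Fin N → ℕ)) (x : ℕ → Fin N → ℝ)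
    (T : Fin P → Set (Fin N → ℕ)) (M : ℝ) : Prop :=
  1 < M ∧
  (∀ i, (T i).Nonempty) ∧
  (∀ i j, i ≠ j → Disjoint (T i) (T j)) ∧
  (⋃ i, T i) = (C : Set (Fin N → ℕ)) ∧
  (∀ i : Fin P, ∀ yj ∈ T i, ∀ yk ∈ T i, ∀ n : ℕ,
    1 / M ≤ monom (x n) yk / monom (x n) yj ∧ monom (x n) yk / monom (x n) yj ≤ M) ∧
  (∀ i j : Fin P, i < j → ∀ yk ∈ T i, ∀ yj ∈ T j,
    Tendsto (fun n => monom (x n) yk / monom (x n) yj) atTop atTop)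

/-- `T` is a (nonempty) union of linkage classes of the network `(C, R)`. -/
def IsUnionOfLinkageClasses {N : ℕ} (C : Finset (Fin N → ℕ))
    (R : Finset ((Fin N → ℕ) × (Fin N → ℕ))) (T : Set (Fin N → ℕ)) : Prop :=
  T.Nonempty ∧ ∀ y ∈ T, ∀ y' ∈ C, Relation.ReflTransGen (symStep R) y y' → y' ∈ T

section Helpers
lemma monom_pos' {N : ℕ} {x : Fin N → ℝ} (hx : ∀ i, 0 < x i) (y : Fin N → ℕ) :
    0 < monom x y := Finset.prod_pos fun i _ => pow_pos (hx i) _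
lemma log_monom' {N : ℕ} {x : Fin N → ℝ} (hx : ∀ i, 0 < x i) (y : Fin N → ℕ) :
    Real.log (monom x y) = ∑ i, (y i : ℝ) * Real.log (x i) := by
  rw [monom, Real.log_prod (fun i _ => (pow_pos (hx i) _).ne')]
  simp [Real.log_pow]
lemma inner_eq' {N : ℕ} (w xb : Fin N → ℝ) (hw : ∀ i, 0 < w i) (y y' : Fin N → ℕ) :
    ∑ i, (cv y' i - cv y i) * (Real.log (w i) - Real.log (xb i))
      = Real.log (monom w y') - Real.log (monom w y)
        - ∑ i, (cv y' i - cv y i) * Real.log (xb i) := by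
  rw [log_monom' hw, log_monom' hw]
  simp only [cv, sub_mul, mul_sub, Finset.sum_sub_distrib]
lemma nonneg_trajectory_const {N : ℕ}
    (x : ℝ → Fin N → ℝ)
    (h : ∀ t : ℝ, 0 ≤ t → HasDerivAt x 0 t) :
    ∀ t : ℝ, 0 ≤ t → x t = x 0 := by
  intro t ht
  have hder : ∀ s ∈ Set.Ici (0:ℝ),
      HasFDerivWithinAt x (0 : ℝ →L[ℝ] (Fin N → ℝ)) (Set.Ici (0:ℝ)) s := by
    intro s hs
    have h0 := (h s hs).hasFDerivAt
    have : (ContinuousLinearMap.toSpanSingleton ℝ (0 : Fin N → ℝ))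
        = (0 : ℝ →L[ℝ] (Fin N → ℝ)) := by ext v; simp
    rw [this] at h0
    exact h0.hasFDerivWithinAt
  have hdiff : DifferentiableOn ℝ x (Set.Ici (0:ℝ)) :=
    fun s hs => ((hder s hs).differentiableWithinAt)
  apply (convex_Ici (0:ℝ)).is_const_of_fderivWithin_eq_zero hdiff
    (fun s hs => (hder s hs).fderivWithin ((uniqueDiffOn_Ici 0) s hs)) ht Set.self_mem_Ici
lemma extraction_single' (r : ℕ → ℝ) (hr : ∀ n, 0 ≤ r n) :
    ∃ φ : ℕ → ℕ, StrictMono φ ∧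
      (Tendsto (fun n => r (φ n)) atTop atTop ∨
       ∃ l, 0 ≤ l ∧ Tendsto (fun n => r (φ n)) atTop (nhds l)) := by
  by_cases h : ∀ K : ℝ, ∀ᶠ n in atTop, K ≤ r n
  · exact ⟨id, strictMono_id, Or.inl (tendsto_atTop.mpr h)⟩
  · push_neg at h
    obtain ⟨K, hK⟩ := h
    have hK' : ∃ᶠ n in atTop, r n < K := hK
    obtain ⟨φ0, hφ0, hφ0K⟩ := extraction_of_frequently_atTop hK'
    have hmem : ∀ n, r (φ0 n) ∈ Set.Icc (0:ℝ) K := fun n => ⟨hr _, (hφ0K n).le⟩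
    obtain ⟨l, hl, φ1, hφ1, hconv⟩ := isCompact_Icc.tendsto_subseq hmem
    exact ⟨φ0 ∘ φ1, hφ0.comp hφ1, Or.inr ⟨l, hl.1, hconv⟩⟩
lemma extraction_list' {α : Type*} (ps : List α) (f : α → ℕ → ℝ) (hf : ∀ a n, 0 ≤ f a n) :
    ∃ φ : ℕ → ℕ, StrictMono φ ∧ ∀ a ∈ ps,
      Tendsto (fun n => f a (φ n)) atTop atTop ∨
      ∃ l, 0 ≤ l ∧ Tendsto (fun n => f a (φ n)) atTop (nhds l) := by
  induction ps with
  | nil => exact ⟨id, strictMono_id, by simp⟩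
  | cons a ps ih =>
    obtain ⟨φ, hφ, hps⟩ := ih
    obtain ⟨ψ, hψ, ha⟩ := extraction_single' (fun n => f a (φ n)) (fun n => hf a _)
    refine ⟨φ ∘ ψ, hφ.comp hψ, ?_⟩
    intro b hb
    rcases List.mem_cons.mp hb with rfl | hb
    · exact ha
    · rcases hps b hb with h | ⟨l, hl, h⟩
      · exact Or.inl (h.comp hψ.tendsto_atTop)
      · exact Or.inr ⟨l, hl, h.comp hψ.tendsto_atTop⟩
lemma bounds_of_tendsto_pos' {r : ℕ → ℝ} (hpos : ∀ n, 0 < r n) {l : ℝ} (hl : 0 < l)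
    (h : Tendsto r atTop (nhds l)) :
    ∃ M, 1 < M ∧ ∀ n, 1 / M ≤ r n ∧ r n ≤ M := by
  obtain ⟨A, hA⟩ := h.bddAbove_range
  have hinv : Tendsto (fun n => (r n)⁻¹) atTop (nhds l⁻¹) := h.inv₀ hl.ne'
  obtain ⟨A', hA'⟩ := hinv.bddAbove_range
  set Mv := max 2 (max A A') with hMv
  have h2 : (2:ℝ) ≤ Mv := le_max_left _ _
  refine ⟨Mv, by linarith, fun n => ⟨?_, ?_⟩⟩
  · have h1 : (r n)⁻¹ ≤ Mv :=
      le_trans (hA' ⟨n, rfl⟩) (le_trans (le_max_right A A') (le_max_right _ _))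
    have hrn := hpos n
    rw [div_le_iff₀ (by linarith : (0:ℝ) < Mv)]
    nlinarith [mul_le_mul_of_nonneg_left h1 hrn.le, mul_inv_cancel₀ hrn.ne']
  · exact le_trans (hA ⟨n, rfl⟩) (le_trans (le_max_left A A') (le_max_right _ _))
lemma mul_log_div_le' {u v : ℝ} (hu : 0 < u) (hv : 0 < v) :
    u * Real.log (v / u) ≤ v := by
  have h := Real.log_le_sub_one_of_pos (div_pos hv hu)
  have h2 := mul_le_mul_of_nonneg_left h hu.le
  have h3 : u * (v / u - 1) = v - u := by field_simp
  nlinarith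
end Helpers

section Dom
variable {α : Type*} {m : α → ℕ → ℝ}

/-- `y` strictly dominates `y'` along the sequence. -/
def Dm (m : α → ℕ → ℝ) (y y' : α) : Prop :=
  Tendsto (fun n => m y n / m y' n) atTop atTop

/-- The ratio of `y` to `y'` is bounded above and below. -/
def Bm (m : α → ℕ → ℝ) (y y' : α) : Prop :=
  ∃ M : ℝ, 1 < M ∧ ∀ n, 1 / M ≤ m y n / m y' n ∧ m y n / m y' n ≤ M

lemma Dm_chain (hm : ∀ a n, 0 < m a n) (y y' y'' : α) :
    (fun n => m y n / m y'' n)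
      = fun n => (m y n / m y' n) * (m y' n / m y'' n) := by
  funext n
  rw [div_mul_div_comm, mul_comm (m y' n) (m y'' n), mul_div_mul_right _ _ (hm y' n).ne']

lemma Dm_trans (hm : ∀ a n, 0 < m a n) {y y' y'' : α}
    (h1 : Dm m y y') (h2 : Dm m y' y'') : Dm m y y'' := by
  unfold Dm
  rw [Dm_chain hm y y' y'']
  exact h1.atTop_mul_atTop₀ h2

lemma not_Dm_self (hm : ∀ a n, 0 < m a n) (y : α) : ¬ Dm m y y := by
  intro h
  have : (fun n => m y n / m y n) = fun _ => (1:ℝ) := by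
    funext n; exact div_self (hm y n).ne'
  unfold Dm at h
  rw [this] at h
  obtain ⟨n, hn⟩ := (h.eventually (eventually_ge_atTop (2:ℝ))).exists
  norm_num at hn

lemma Dm_asymm (hm : ∀ a n, 0 < m a n) {y y' : α}
    (h1 : Dm m y y') (h2 : Dm m y' y) : False := by
  exact not_Dm_self hm y (Dm_trans hm h1 h2)

lemma Bm_symm (hm : ∀ a n, 0 < m a n) {y y' : α} (h : Bm m y y') : Bm m y' y := by
  obtain ⟨M, hM, hb⟩ := h
  have hM0 : (0:ℝ) < M := by linarith
  refine ⟨M, hM, fun n => ?_⟩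
  obtain ⟨h1, h2⟩ := hb n
  have hr : 0 < m y n / m y' n := div_pos (hm y n) (hm y' n)
  have hinv : m y' n / m y n = (m y n / m y' n)⁻¹ := by
    rw [inv_div]
  rw [hinv]
  constructor
  · rw [one_div, inv_le_inv₀ (by positivity) hr]
    exact h2
  · rw [inv_le_comm₀ hr hM0]
    rw [one_div] at h1
    exact h1
  -- fallback
lemma Bm_self (hm : ∀ a n, 0 < m a n) (y : α) : Bm m y y := by
  refine ⟨2, by norm_num, fun n => ?_⟩
  rw [div_self (hm y n).ne']
  norm_num

lemma Dm_of_Bm_Dm (hm : ∀ a n, 0 < m a n) {y y' y'' : α}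
    (h1 : Bm m y y') (h2 : Dm m y' y'') : Dm m y y'' := by
  obtain ⟨M, hM, hb⟩ := h1
  have hM0 : (0:ℝ) < M := by linarith
  unfold Dm
  rw [Dm_chain hm y y' y'']
  apply tendsto_atTop_mono (fun n => ?_) (h2.const_mul_atTop (show (0:ℝ) < 1/M by positivity))
  have hr2 : 0 ≤ m y' n / m y'' n := (div_pos (hm _ _) (hm _ _)).le
  exact mul_le_mul_of_nonneg_right (hb n).1 hr2

lemma Dm_of_Dm_Bm (hm : ∀ a n, 0 < m a n) {y y' y'' : α}
    (h1 : Dm m y y') (h2 : Bm m y' y'') : Dm m y y'' := by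
  obtain ⟨M, hM, hb⟩ := h2
  have hM0 : (0:ℝ) < M := by linarith
  unfold Dm
  rw [Dm_chain hm y y' y'']
  apply tendsto_atTop_mono (fun n => ?_) (h1.atTop_mul_const' (show (0:ℝ) < 1/M by positivity))
  have hr1 : 0 ≤ m y n / m y' n := (div_pos (hm _ _) (hm _ _)).le
  calc m y n / m y' n * (1/M) ≤ m y n / m y' n * (m y' n / m y'' n) :=
        mul_le_mul_of_nonneg_left (hb n).1 hr1
    _ = _ := rfl
end Dom

lemma kappa_bound' {k e q Q : ℝ} (hek : e < k) (hk : k < 1/e) (he : 0 < e)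
    (hqQ : q ≤ Q) (hQ : 0 ≤ Q) : k * q ≤ (1/e) * Q := by
  rcases le_or_gt 0 q with h | h
  · calc k*q ≤ (1/e)*q := mul_le_mul_of_nonneg_right hk.le h
      _ ≤ (1/e)*Q := mul_le_mul_of_nonneg_left hqQ (by positivity)
  · nlinarith [mul_neg_of_pos_of_neg (lt_trans he hek) h,
      mul_nonneg (le_of_lt (show (0:ℝ) < 1/e by positivity)) hQ]



/-- For a bounded trajectory of a weakly reversible non-autonomous mass-action system with
bounded kinetics that approaches the boundary of the positive orthant, either (C1) every
Lyapunov function `V_x̄` eventually strictly decreases along the trajectory, or (C2) there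
is a sequence of times `t n → ∞` along which the trajectory converges to a boundary point,
the complexes are partitioned along the corresponding trajectory points, and the highest
tier is a union of linkage classes. -/
theorem stmt_5 {N : ℕ} (hN : 0 < N)
    (C : Finset (Fin N → ℕ)) (R : Finset ((Fin N → ℕ) × (Fin N → ℕ)))
    (hnet : IsNetwork C R) (hwr : WeaklyReversible R)
    (κ : ((Fin N → ℕ) × (Fin N → ℕ)) → ℝ → ℝ) (η : ℝ) (hη : 0 < η)
    (hκ : ∀ r ∈ R, ∀ t : ℝ, 0 ≤ t → η < κ r t ∧ κ r t < 1 / η)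
    (x : ℝ → Fin N → ℝ)
    (hpos : ∀ t : ℝ, 0 ≤ t → ∀ i, 0 < x t i)
    (hODE : ∀ t : ℝ, 0 ≤ t →
      HasDerivAt x (∑ r ∈ R, (κ r t * monom (x t) r.1) • (cv r.2 - cv r.1)) t)
    (hbdd : ∃ B : ℝ, ∀ t : ℝ, 0 ≤ t → ∀ i, x t i ≤ B)
    (hdist : Tendsto (fun t => ⨅ i, x t i) atTop (nhds 0)) :
    (∀ xb : Fin N → ℝ, (∀ i, 0 < xb i) → ∃ T : ℝ, 0 < T ∧ ∀ t > T,
        (∑ r ∈ R, κ r t * monom (x t) r.1 *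
          (∑ i, (cv r.2 i - cv r.1 i) * (Real.log (x t i) - Real.log (xb i)))) < 0) ∨
    (∃ tn : ℕ → ℝ, (∀ n, 0 ≤ tn n) ∧ Tendsto tn atTop atTop ∧
      ∃ z : Fin N → ℝ, (∀ i, 0 ≤ z i) ∧ (∃ i, z i = 0) ∧
        Tendsto (fun n => x (tn n)) atTop (nhds z) ∧
        ∃ (P : ℕ) (hP : 0 < P) (T : Fin P → Set (Fin N → ℕ)) (M : ℝ),
          PartitionedAlong C (fun n => x (tn n)) T M ∧
          IsUnionOfLinkageClasses C R (T ⟨0, hP⟩)) := by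
  classical
  haveI : NeZero N := ⟨hN.ne'⟩
  by_cases hC1 : (∀ xb : Fin N → ℝ, (∀ i, 0 < xb i) → ∃ T : ℝ, 0 < T ∧ ∀ t > T,
      (∑ r ∈ R, κ r t * monom (x t) r.1 *
        (∑ i, (cv r.2 i - cv r.1 i) * (Real.log (x t i) - Real.log (xb i)))) < 0)
  · exact Or.inl hC1
  right
  by_cases hR : R = ∅
  · -- degenerate case: x is constant, contradicting hdist
    exfalso
    have hc : ∀ t : ℝ, 0 ≤ t → x t = x 0 := by
      apply nonneg_trajectory_const
      intro t ht
      have := hODE t ht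
      rwa [hR, Finset.sum_empty] at this
    obtain ⟨i0, hi0⟩ := Finite.exists_min (x 0)
    have hbb : BddBelow (Set.range (x 0)) := (Set.finite_range _).bddBelow
    have hiInf : ⨅ i, x 0 i = x 0 i0 := le_antisymm (ciInf_le hbb i0) (le_ciInf hi0)
    have hlim : Tendsto (fun _ : ℝ => x 0 i0) atTop (nhds 0) := by
      apply hdist.congr'
      filter_upwards [eventually_ge_atTop (0:ℝ)] with t ht
      rw [hc t ht] at *
      exact hiInf
    have : x 0 i0 = 0 := tendsto_nhds_unique tendsto_const_nhds hlim
    exact absurd this (hpos 0 le_rfl i0).ne'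
  -- main case
  push_neg at hC1
  obtain ⟨xb, hxb, hbad⟩ := hC1
  -- choose times sₙ > n+1 with nonnegative Lyapunov derivative
  have hs' : ∀ n : ℕ, ∃ t, t > (n:ℝ) + 1 ∧
      0 ≤ ∑ r ∈ R, κ r t * monom (x t) r.1 *
        ∑ i, (cv r.2 i - cv r.1 i) * (Real.log (x t i) - Real.log (xb i)) := by
    intro n
    obtain ⟨t, ht, h0⟩ := hbad ((n:ℝ)+1) (by positivity)
    exact ⟨t, ht, h0⟩
  choose s hs1 hs2 using hs'
  have hs0 : ∀ n, (0:ℝ) ≤ s n := fun n => le_of_lt (lt_of_le_of_lt (by positivity) (hs1 n))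
  have hstop : Tendsto s atTop atTop := by
    apply tendsto_atTop_mono (f := fun n : ℕ => (n:ℝ)) (fun n => ?_) tendsto_natCast_atTop_atTop
    have := hs1 n
    linarith
  -- compactness: extract convergent subsequence
  obtain ⟨B, hB⟩ := hbdd
  have hmem : ∀ n, x (s n) ∈ Set.Icc (0 : Fin N → ℝ) (fun _ => B) := by
    intro n
    constructor
    · intro i; exact (hpos _ (hs0 n) i).le
    · intro i; exact hB _ (hs0 n) i
  obtain ⟨z, hzmem, φ1, hφ1, hconv1⟩ := isCompact_Icc.tendsto_subseq hmem
  -- extract subsequence along which all monomial ratios behave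
  obtain ⟨φ2, hφ2, hlist⟩ := extraction_list' (C ×ˢ C).toList
    (fun p n => monom (x (s (φ1 n))) p.1 / monom (x (s (φ1 n))) p.2)
    (fun p n => le_of_lt (div_pos (monom_pos' (hpos _ (hs0 _)) _)
        (monom_pos' (hpos _ (hs0 _)) _)))
  set t : ℕ → ℝ := fun n => s (φ1 (φ2 n)) with htdef
  set u : ℕ → Fin N → ℝ := fun n => x (t n) with hudef
  have ht0 : ∀ n, (0:ℝ) ≤ t n := fun n => hs0 _
  have hupos : ∀ n i, 0 < u n i := fun n i => hpos _ (ht0 n) i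
  have httop : Tendsto t atTop atTop := hstop.comp ((hφ1.comp hφ2).tendsto_atTop)
  have hconv : Tendsto u atTop (nhds z) := hconv1.comp hφ2.tendsto_atTop
  have hz0 : ∀ i, 0 ≤ z i := fun i => hzmem.1 i
  -- z has a zero coordinate
  have hzero : ∃ i, z i = 0 := by
    by_contra hno
    push_neg at hno
    have hzpos : ∀ i, 0 < z i := fun i => (hz0 i).lt_of_ne (Ne.symm (hno i))
    obtain ⟨i0, hi0⟩ := Finite.exists_min z
    have hinf : Tendsto (fun n => ⨅ i, u n i) atTop (nhds 0) := hdist.comp httop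
    have hcoord : ∀ i, Tendsto (fun n => u n i) atTop (nhds (z i)) := by
      intro i
      exact (continuous_apply i).continuousAt.tendsto.comp hconv
    have hev : ∀ᶠ n in atTop, ∀ i, z i0 / 2 ≤ u n i := by
      rw [eventually_all]
      intro i
      have := (hcoord i).eventually (eventually_ge_nhds
        (show z i0 / 2 < z i from lt_of_lt_of_le (by linarith [hzpos i0]) (hi0 i)))
      exact this
    have hev2 : ∀ᶠ n in atTop, z i0 / 2 ≤ ⨅ i, u n i := by
      filter_upwards [hev] with n hn
      exact le_ciInf hn
    have hlt : ∀ᶠ n in atTop, (⨅ i, u n i) < z i0 / 2 :=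
      hinf.eventually (eventually_lt_nhds (by linarith [hzpos i0]))
    obtain ⟨n, h1, h2⟩ := (hev2.and hlt).exists
    linarith
  -- ratio machinery
  have hRne : R.Nonempty := Finset.nonempty_iff_ne_empty.mpr hR
  have hCne : C.Nonempty := ⟨hRne.choose.1, (hnet.1 _ hRne.choose_spec).1⟩
  set m : (Fin N → ℕ) → ℕ → ℝ := fun y n => monom (u n) y with hm
  have hmpos : ∀ (y : Fin N → ℕ) (n : ℕ), 0 < m y n := fun y n => monom_pos' (hupos n) y
  have htri : ∀ y ∈ C, ∀ y' ∈ C, Dm m y y' ∨ Dm m y' y ∨ Bm m y y' := by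
    intro y hy y' hy'
    have hmem : (y, y') ∈ (C ×ˢ C).toList := by
      rw [Finset.mem_toList, Finset.mem_product]; exact ⟨hy, hy'⟩
    rcases hlist (y, y') hmem with h | ⟨l, hl0, hconvr⟩
    · exact Or.inl h
    · rcases hl0.lt_or_eq with hl | hl
      · exact Or.inr (Or.inr (bounds_of_tendsto_pos'
          (fun n => div_pos (hmpos y n) (hmpos y' n)) hl hconvr))
      · rw [← hl] at hconvr
        have h0 : Tendsto (fun n => m y n / m y' n) atTop (nhdsWithin 0 (Set.Ioi 0)) := by
          apply tendsto_nhdsWithin_of_tendsto_nhds_of_eventually_within _ hconvr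
          exact Eventually.of_forall (fun n => div_pos (hmpos y n) (hmpos y' n))
        have hinv := h0.inv_tendsto_nhdsGT_zero
        refine Or.inr (Or.inl ?_)
        have heq : (fun n => m y n / m y' n)⁻¹ = fun n => m y' n / m y n := by
          funext n; simp [Pi.inv_apply, inv_div]
        rwa [heq] at hinv
  -- the rank of a complex: the number of complexes strictly dominating it
  set rk : (Fin N → ℕ) → ℕ := fun y => (C.filter (fun z => Dm m z y)).card with hrk
  have hrk_lt : ∀ y ∈ C, ∀ y' ∈ C, Dm m y y' → rk y < rk y' := by
    intro y hy y' hy' hd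
    have hsub : C.filter (fun z => Dm m z y) ⊆ C.filter (fun z => Dm m z y') := by
      intro w hw
      rw [Finset.mem_filter] at *
      exact ⟨hw.1, Dm_trans hmpos hw.2 hd⟩
    exact Finset.card_lt_card ((Finset.ssubset_iff_of_subset hsub).mpr
      ⟨y, Finset.mem_filter.mpr ⟨hy, hd⟩,
       fun hmem => not_Dm_self hmpos y (Finset.mem_filter.mp hmem).2⟩)
  have hrk_eq : ∀ y ∈ C, ∀ y' ∈ C, Bm m y y' → rk y = rk y' := by
    intro y hy y' hy' hb
    have : C.filter (fun z => Dm m z y) = C.filter (fun z => Dm m z y') := by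
      ext w
      simp only [Finset.mem_filter]
      constructor
      · rintro ⟨hwC, hw⟩; exact ⟨hwC, Dm_of_Dm_Bm hmpos hw hb⟩
      · rintro ⟨hwC, hw⟩; exact ⟨hwC, Dm_of_Dm_Bm hmpos hw (Bm_symm hmpos hb)⟩
    simp only [hrk, this]
  have hlt_dm : ∀ y ∈ C, ∀ y' ∈ C, rk y < rk y' → Dm m y y' := by
    intro y hy y' hy' hlt
    rcases htri y hy y' hy' with h | h | h
    · exact h
    · exact absurd (hrk_lt y' hy' y hy h) (by omega)
    · exact absurd (hrk_eq y hy y' hy' h) (by omega)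
  have heq_bm : ∀ y ∈ C, ∀ y' ∈ C, rk y = rk y' → Bm m y y' := by
    intro y hy y' hy' heq
    rcases htri y hy y' hy' with h | h | h
    · exact absurd (hrk_lt y hy y' hy' h) (by omega)
    · exact absurd (hrk_lt y' hy' y hy h) (by omega)
    · exact h
  -- tiers indexed by the sorted distinct rank values
  set V : Finset ℕ := C.image rk with hV
  have hP : 0 < V.card := Finset.card_pos.mpr (hCne.image _)
  set e : Fin V.card ≃o {v // v ∈ V} := V.orderIsoOfFin rfl with he
  set T : Fin V.card → Set (Fin N → ℕ) :=
    fun i => {y | y ∈ C ∧ rk y = (e i : ℕ)} with hT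
  have hTsub : ∀ i, ∀ y ∈ T i, y ∈ C ∧ rk y = (e i : ℕ) := fun i y hy => hy
  have hTmem : ∀ (i) (y), y ∈ C → rk y = (e i : ℕ) → y ∈ T i := fun i y h1 h2 => ⟨h1, h2⟩
  have hTne : ∀ i, (T i).Nonempty := by
    intro i
    have hmemV : (e i : ℕ) ∈ C.image rk := (e i).2
    obtain ⟨y, hyC, hy⟩ := Finset.mem_image.mp hmemV
    exact ⟨y, hTmem i y hyC hy⟩
  have hTdisj : ∀ i j, i ≠ j → Disjoint (T i) (T j) := by
    intro i j hij
    rw [Set.disjoint_left]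
    intro y hyi hyj
    exact hij (e.injective (Subtype.ext ((hTsub i y hyi).2.symm.trans (hTsub j y hyj).2)))
  have hTindex : ∀ y ∈ C, ∃ i, y ∈ T i := by
    intro y hy
    have hv : rk y ∈ V := Finset.mem_image_of_mem rk hy
    refine ⟨e.symm ⟨rk y, hv⟩, hTmem _ y hy ?_⟩
    rw [e.apply_symm_apply]
  have hTunion : (⋃ i, T i) = (C : Set (Fin N → ℕ)) := by
    apply Set.eq_of_subset_of_subset
    · exact Set.iUnion_subset fun i y hy => (hTsub i y hy).1
    · intro y hy
      obtain ⟨i, hi⟩ := hTindex y hy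
      exact Set.mem_iUnion.mpr ⟨i, hi⟩
  have hTcross : ∀ i j, i < j → ∀ yk ∈ T i, ∀ yj ∈ T j,
      Tendsto (fun n => m yk n / m yj n) atTop atTop := by
    intro i j hij yk hyk yj hyj
    have h1 : (e i : ℕ) < (e j : ℕ) := e.strictMono hij
    exact hlt_dm yk (hTsub _ _ hyk).1 yj (hTsub _ _ hyj).1
      (by rw [(hTsub _ _ hyk).2, (hTsub _ _ hyj).2]; exact h1)
  -- global tier constant
  have hCprodne : (C ×ˢ C).Nonempty := hCne.product hCne
  set g : ((Fin N → ℕ) × (Fin N → ℕ)) → ℝ :=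
    fun p => if h : Bm m p.1 p.2 then max 2 h.choose else 2 with hg
  have hg2 : ∀ p, 2 ≤ g p := by
    intro p
    simp only [hg]
    split
    · exact le_max_left _ _
    · exact le_rfl
  set Mg : ℝ := (C ×ˢ C).sup' hCprodne g with hMg
  have hMg2 : 2 ≤ Mg := le_trans (hg2 _) (Finset.le_sup' g hCprodne.choose_spec)
  have hTbdd : ∀ i, ∀ yj ∈ T i, ∀ yk ∈ T i, ∀ n,
      1/Mg ≤ m yk n / m yj n ∧ m yk n / m yj n ≤ Mg := by
    intro i yj hyj yk hyk n
    have hkC := (hTsub _ _ hyk).1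
    have hjC := (hTsub _ _ hyj).1
    have hbm : Bm m yk yj :=
      heq_bm yk hkC yj hjC ((hTsub _ _ hyk).2.trans (hTsub _ _ hyj).2.symm)
    have hgeq : g (yk, yj) = max 2 hbm.choose := by
      simp only [hg]; exact dif_pos hbm
    obtain ⟨hM0gt, hM0b⟩ := hbm.choose_spec
    have hgle : g (yk, yj) ≤ Mg :=
      Finset.le_sup' g (Finset.mem_product.mpr ⟨hkC, hjC⟩)
    have hchle : hbm.choose ≤ Mg := le_trans (le_trans (le_max_right 2 _) hgeq.ge) hgle
    constructor
    · refine le_trans ?_ (hM0b n).1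
      apply one_div_le_one_div_of_le (by linarith) hchle
    · exact le_trans (hM0b n).2 hchle
  -- assemble the conclusion; only the linkage-class property of the top tier remains
  refine ⟨t, ht0, httop, z, hz0, hzero, hconv, V.card, hP, T, Mg,
    ⟨by linarith, hTne, hTdisj, hTunion, hTbdd, hTcross⟩, hTne ⟨0,hP⟩, ?_⟩
  by_contra hcon
  push_neg at hcon
  obtain ⟨y0, hy0T, y1, hy1C, hreach, hy1not⟩ := hcon
  have hdir := hwr y0 y1 hreach
  have cross : ∀ c, Relation.ReflTransGen (dirStep R) y0 c → c ∉ T ⟨0,hP⟩ →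
      ∃ a b, (a, b) ∈ R ∧ a ∈ T ⟨0,hP⟩ ∧ b ∉ T ⟨0,hP⟩ := by
    intro c hc
    induction hc with
    | refl => exact fun h => absurd hy0T h
    | @tail p q hp hpq ih =>
      intro hq
      by_cases hp0 : p ∈ T ⟨0,hP⟩
      · exact ⟨p, q, hpq, hp0, hq⟩
      · exact ih hp0
  obtain ⟨a, b, hab, haT, hbT⟩ := cross y1 hdir hy1not
  have haC : a ∈ C := (hnet.1 _ hab).1
  have hbC : b ∈ C := (hnet.1 _ hab).2.1
  obtain ⟨j, hbj⟩ := hTindex b hbC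
  have hj0 : (⟨0,hP⟩ : Fin V.card) < j :=
    lt_of_le_of_ne (Fin.mk_le_of_le_val (Nat.zero_le _))
      (fun h => hbT (by rw [h]; exact hbj))
  have hdm_ab : Dm m a b := hTcross ⟨0,hP⟩ j hj0 a haT b hbj
  -- every complex is dominated by `a` up to a constant
  have hmin : ∀ y ∈ C, ¬ Dm m y a := by
    intro y hy hd
    have h1 : rk y < rk a := hrk_lt y hy a haC hd
    have hv : rk y ∈ V := Finset.mem_image_of_mem rk hy
    have h2 : (e ⟨0,hP⟩ : ℕ) ≤ rk y := by
      calc (e ⟨0,hP⟩ : ℕ) ≤ (e (e.symm ⟨rk y, hv⟩) : ℕ) :=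
            Subtype.coe_le_coe.mpr (e.monotone (Fin.mk_le_of_le_val (Nat.zero_le _)))
        _ = rk y := by rw [e.apply_symm_apply]
    have h3 : rk a = (e ⟨0,hP⟩ : ℕ) := (hTsub _ _ haT).2
    omega
  have hA : ∀ y ∈ C, ∃ A : ℝ, ∀ n, m y n / m a n ≤ A := by
    intro y hy
    rcases htri y hy a haC with h | h | h
    · exact absurd h (hmin y hy)
    · have heq : (fun n => m y n / m a n) = fun n => (m a n / m y n)⁻¹ := by
        funext n; rw [inv_div]
      have h0 : Tendsto (fun n => m y n / m a n) atTop (nhds 0) := by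
        rw [heq]; exact tendsto_inv_atTop_zero.comp h
      obtain ⟨A, hA'⟩ := h0.bddAbove_range
      exact ⟨A, fun n => hA' ⟨n, rfl⟩⟩
    · obtain ⟨M0, _, hb⟩ := h
      exact ⟨M0, fun n => (hb n).2⟩
  set gA : (Fin N → ℕ) → ℝ :=
    fun y => if h : ∃ A : ℝ, ∀ n, m y n / m a n ≤ A then h.choose else 0 with hgA
  set Ag : ℝ := C.sup' hCne gA with hAgdef
  have hAgb : ∀ y ∈ C, ∀ n, m y n ≤ Ag * m a n := by
    intro y hy n
    have h1 : ∃ A : ℝ, ∀ n, m y n / m a n ≤ A := hA y hy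
    have h2 : m y n / m a n ≤ gA y := by
      have : gA y = h1.choose := by simp only [hgA]; exact dif_pos h1
      rw [this]; exact h1.choose_spec n
    have h3 : gA y ≤ Ag := Finset.le_sup' gA hy
    rw [div_le_iff₀ (hmpos a n)] at h2
    calc m y n ≤ gA y * m a n := h2
      _ ≤ Ag * m a n := mul_le_mul_of_nonneg_right h3 (hmpos a n).le
  have hAg1 : 1 ≤ Ag := by
    have h1 := hAgb a haC 0
    nlinarith [hmpos a 0]
  -- constants
  set cst : ((Fin N → ℕ) × (Fin N → ℕ)) → ℝ :=
    fun r => ∑ i, (cv r.2 i - cv r.1 i) * Real.log (xb i) with hcst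
  set Kt : ((Fin N → ℕ) × (Fin N → ℕ)) → ℝ :=
    fun r => (1/η) * Ag * (1 + |cst r|) with hKt
  have hKt0 : ∀ r, 0 ≤ Kt r := by
    intro r
    have h1 : (0:ℝ) ≤ |cst r| := abs_nonneg _
    have h2 : (0:ℝ) ≤ 1/η := by positivity
    simp only [hKt]
    have h3 : (0:ℝ) ≤ Ag := by linarith [hAg1]
    have h4 : (0:ℝ) ≤ 1 + |cst r| := by linarith
    exact mul_nonneg (mul_nonneg h2 h3) h4
  set Kbig : ℝ := ∑ r ∈ R.erase (a,b), Kt r with hKb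
  have hKb0 : 0 ≤ Kbig := Finset.sum_nonneg fun r _ => hKt0 r
  -- generic term bound
  have hterm : ∀ n, ∀ r ∈ R, κ r (t n) * m r.1 n *
      (∑ i, (cv r.2 i - cv r.1 i) * (Real.log (u n i) - Real.log (xb i))) ≤ Kt r * m a n := by
    intro n r hr
    obtain ⟨hκ1, hκ2⟩ := hκ r hr (t n) (ht0 n)
    have h1C := (hnet.1 r hr).1
    have h2C := (hnet.1 r hr).2.1
    have hm1 : 0 < m r.1 n := hmpos r.1 n
    have hm2 : 0 < m r.2 n := hmpos r.2 n
    have hrw : ∑ i, (cv r.2 i - cv r.1 i) * (Real.log (u n i) - Real.log (xb i))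
        = Real.log (m r.2 n) - Real.log (m r.1 n) - cst r :=
      inner_eq' (u n) xb (hupos n) r.1 r.2
    rw [hrw]
    have hlogb : m r.1 n * (Real.log (m r.2 n) - Real.log (m r.1 n)) ≤ Ag * m a n := by
      have h4 := mul_log_div_le' hm1 hm2
      rw [Real.log_div hm2.ne' hm1.ne'] at h4
      exact h4.trans (hAgb r.2 h2C n)
    have hcstb : m r.1 n * (- cst r) ≤ (Ag * m a n) * |cst r| := by
      calc m r.1 n * (- cst r) ≤ m r.1 n * |cst r| :=
            mul_le_mul_of_nonneg_left (neg_le_abs _) hm1.le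
        _ ≤ (Ag * m a n) * |cst r| :=
            mul_le_mul_of_nonneg_right (hAgb r.1 h1C n) (abs_nonneg _)
    have hQ0 : (0:ℝ) ≤ Ag * m a n := mul_nonneg (by linarith [hAg1]) (hmpos a n).le
    have hp1 : κ r (t n) * (m r.1 n * (Real.log (m r.2 n) - Real.log (m r.1 n)))
        ≤ (1/η) * (Ag * m a n) := kappa_bound' hκ1 hκ2 hη hlogb hQ0
    have hp2 : κ r (t n) * (m r.1 n * (- cst r)) ≤ (1/η) * ((Ag * m a n) * |cst r|) :=
      kappa_bound' hκ1 hκ2 hη hcstb (mul_nonneg hQ0 (abs_nonneg _))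
    have hsplit : κ r (t n) * m r.1 n * (Real.log (m r.2 n) - Real.log (m r.1 n) - cst r)
        = κ r (t n) * (m r.1 n * (Real.log (m r.2 n) - Real.log (m r.1 n)))
          + κ r (t n) * (m r.1 n * (- cst r)) := by ring
    rw [hsplit]
    have hfin : (1/η) * (Ag * m a n) + (1/η) * ((Ag * m a n) * |cst r|) = Kt r * m a n := by
      simp only [hKt]; ring
    linarith
  -- pick a time where the dominant reaction drives the sum negative
  have hlogtop : Tendsto (fun n => Real.log (m a n / m b n)) atTop atTop :=
    Real.tendsto_log_atTop.comp hdm_ab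
  obtain ⟨n, hn⟩ := (hlogtop.eventually
    (eventually_ge_atTop (Kbig/η + |cst (a,b)| + 1))).exists
  -- the sum at time n
  have hSnn : 0 ≤ ∑ r ∈ R, κ r (t n) * m r.1 n *
      (∑ i, (cv r.2 i - cv r.1 i) * (Real.log (u n i) - Real.log (xb i))) :=
    hs2 (φ1 (φ2 n))
  obtain ⟨hκ1, hκ2⟩ := hκ (a,b) hab (t n) (ht0 n)
  have hma : 0 < m a n := hmpos a n
  have hmb : 0 < m b n := hmpos b n
  have hrwab : ∑ i, (cv b i - cv a i) * (Real.log (u n i) - Real.log (xb i))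
      = Real.log (m b n) - Real.log (m a n) - cst (a,b) :=
    inner_eq' (u n) xb (hupos n) a b
  have hD : Real.log (m b n) - Real.log (m a n) - cst (a,b) ≤ -(Kbig/η) - 1 := by
    have h5 : Real.log (m a n / m b n) = Real.log (m a n) - Real.log (m b n) :=
      Real.log_div hma.ne' hmb.ne'
    have h6 : - cst (a,b) ≤ |cst (a,b)| := neg_le_abs _
    linarith
  have hspecial : κ (a,b) (t n) * m a n *
      (∑ i, (cv b i - cv a i) * (Real.log (u n i) - Real.log (xb i)))
      ≤ - Kbig * m a n - η * m a n := by
    rw [hrwab]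
    set D := Real.log (m b n) - Real.log (m a n) - cst (a,b) with hDdef
    have hDneg : D ≤ 0 := by
      have h10 : (0:ℝ) ≤ Kbig/η := div_nonneg hKb0 hη.le
      linarith
    have h7 : κ (a,b) (t n) * (m a n * D) ≤ η * (m a n * D) := by
      apply mul_le_mul_of_nonpos_right hκ1.le
      exact mul_nonpos_of_nonneg_of_nonpos hma.le hDneg
    have h8 : η * (m a n * D) ≤ η * (m a n * (-(Kbig/η) - 1)) := by
      apply mul_le_mul_of_nonneg_left _ hη.le
      exact mul_le_mul_of_nonneg_left hD hma.le
    have h9 : η * (m a n * (-(Kbig/η) - 1)) = - Kbig * m a n - η * m a n := by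
      field_simp
    calc κ (a,b) (t n) * m a n * D = κ (a,b) (t n) * (m a n * D) := by ring
      _ ≤ η * (m a n * D) := h7
      _ ≤ η * (m a n * (-(Kbig/η) - 1)) := h8
      _ = - Kbig * m a n - η * m a n := h9
  -- sum over the remaining reactions
  have hrest : ∑ r ∈ R.erase (a,b), κ r (t n) * m r.1 n *
      (∑ i, (cv r.2 i - cv r.1 i) * (Real.log (u n i) - Real.log (xb i)))
      ≤ Kbig * m a n := by
    rw [hKb, Finset.sum_mul]
    exact Finset.sum_le_sum fun r hr => hterm n r (Finset.mem_of_mem_erase hr)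
  have hsum : ∑ r ∈ R, κ r (t n) * m r.1 n *
      (∑ i, (cv r.2 i - cv r.1 i) * (Real.log (u n i) - Real.log (xb i)))
      = (∑ r ∈ R.erase (a,b), κ r (t n) * m r.1 n *
          (∑ i, (cv r.2 i - cv r.1 i) * (Real.log (u n i) - Real.log (xb i))))
        + κ (a,b) (t n) * m a n *
          (∑ i, (cv b i - cv a i) * (Real.log (u n i) - Real.log (xb i))) :=
    (Finset.sum_erase_add R _ hab).symm
  have hfinal : (0:ℝ) < η * m a n := mul_pos hη (hmpos a n)
  rw [hsum] at hSnn
  linarith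
end

section
/- Let (C, R) be a chemical reaction network on N species whose reaction diagram has a single linkage class, and let x : [0,∞) → ℝ^N_{>0} be a trajectory of the associated non-autonomous mass-action system with bounded kinetics. Suppose x(t) remains bounded and dist(x(t), ∂ℝ^N_{≥0}) → 0 as t → ∞ (equivalently, min_i x_i(t) → 0). Then there does not exist a sequence of times t_n → ∞ such that C is partitioned along x_n := x(t_n) with the highest tier T_1 consisting of a union of linkage classes (equivalently, with T_1 equal to all of C). -/
open Filter

/-- For a bounded trajectory of a single-linkage-class non-autonomous mass-action system
with bounded kinetics that approaches the boundary of the positive orthant, there is no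
sequence of times `t n → ∞` along which the complexes are partitioned with the highest
tier consisting of a union of linkage classes. -/
theorem stmt_6 {N : ℕ} (hN : 0 < N)
    (C : Finset (Fin N → ℕ)) (R : Finset ((Fin N → ℕ) × (Fin N → ℕ)))
    (hnet : IsNetwork C R)
    (hsingle : ∀ y ∈ C, ∀ y' ∈ C, Relation.ReflTransGen (symStep R) y y')
    (κ : ((Fin N → ℕ) × (Fin N → ℕ)) → ℝ → ℝ) (η : ℝ) (hη : 0 < η)
    (hκ : ∀ r ∈ R, ∀ t : ℝ, 0 ≤ t → η < κ r t ∧ κ r t < 1 / η)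
    (x : ℝ → Fin N → ℝ)
    (hpos : ∀ t : ℝ, 0 ≤ t → ∀ i, 0 < x t i)
    (hODE : ∀ t : ℝ, 0 ≤ t →
      HasDerivAt x (∑ r ∈ R, (κ r t * monom (x t) r.1) • (cv r.2 - cv r.1)) t)
    (hbdd : ∃ B : ℝ, ∀ t : ℝ, 0 ≤ t → ∀ i, x t i ≤ B)
    (hdist : Tendsto (fun t => ⨅ i, x t i) atTop (nhds 0)) :
    ¬ ∃ tn : ℕ → ℝ, (∀ n, 0 ≤ tn n) ∧ Tendsto tn atTop atTop ∧
        ∃ (P : ℕ) (hP : 0 < P) (T : Fin P → Set (Fin N → ℕ)) (M : ℝ),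
          PartitionedAlong C (fun n => x (tn n)) T M ∧
          IsUnionOfLinkageClasses C R (T ⟨0, hP⟩) := by
  rintro ⟨tn, htn0, htnTop, P, hP, T, MM, ⟨hM, hTne, hTdisj, hTunion, hwithin, -⟩, hT0ne, hT0cl⟩
  classical
  haveI hFinNe : Nonempty (Fin N) := ⟨⟨0, hN⟩⟩
  obtain ⟨B, hB⟩ := hbdd
  -- Tier 0 is all of C
  have hT0subC : T ⟨0, hP⟩ ⊆ (C : Set (Fin N → ℕ)) := by
    rw [← hTunion]; exact Set.subset_iUnion T ⟨0, hP⟩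
  obtain ⟨y0, hy0T⟩ := hT0ne
  have hy0C : y0 ∈ C := hT0subC hy0T
  have hCT0 : ∀ y ∈ C, y ∈ T ⟨0, hP⟩ := fun y hy =>
    hT0cl y0 hy0T y hy (hsingle y0 hy0C y hy)
  -- positivity along the sequence
  have hqpos : ∀ (n : ℕ) (i : Fin N), 0 < x (tn n) i := fun n i => hpos _ (htn0 n) i
  have hmonpos : ∀ (n : ℕ) (y : Fin N → ℕ), 0 < monom (x (tn n)) y := fun n y =>
    Finset.prod_pos fun i _ => pow_pos (hqpos n i) _
  have hM0 : (0:ℝ) < MM := lt_trans one_pos hM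
  -- log-comparability
  have hlog : ∀ y ∈ C, ∀ y' ∈ C, ∀ n : ℕ,
      |Real.log (monom (x (tn n)) y') - Real.log (monom (x (tn n)) y)| ≤ Real.log MM := by
    intro y hy y' hy' n
    obtain ⟨h1, h2⟩ := hwithin ⟨0, hP⟩ y (hCT0 y hy) y' (hCT0 y' hy') n
    have ha := hmonpos n y'
    have hb := hmonpos n y
    rw [← Real.log_div ha.ne' hb.ne', abs_le]
    refine ⟨?_, Real.log_le_log (by positivity) h2⟩
    have := Real.log_le_log (by positivity) h1
    rwa [one_div, Real.log_inv] at this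
  -- log of monomial
  have hlogmon : ∀ (n : ℕ) (y : Fin N → ℕ),
      Real.log (monom (x (tn n)) y) = ∑ i, (y i : ℝ) * Real.log (x (tn n) i) := by
    intro n y
    rw [monom, Real.log_prod (fun i _ => (pow_pos (hqpos n i) _).ne')]
    exact Finset.sum_congr rfl fun i _ => Real.log_pow _ _
  -- first subsequence: convergence to z
  have hqmem : ∀ n : ℕ, x (tn n) ∈ Set.pi Set.univ (fun _ : Fin N => Set.Icc (0:ℝ) B) :=
    fun n i _ => ⟨(hqpos n i).le, hB _ (htn0 n) i⟩
  obtain ⟨z, hzmem, φ, hφ, hφtend⟩ :=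
    (isCompact_univ_pi fun _ : Fin N => isCompact_Icc).tendsto_subseq hqmem
  have hp_i : ∀ i, Tendsto (fun j => x (tn (φ j)) i) atTop (nhds (z i)) := by
    intro i
    have := tendsto_pi_nhds.mp hφtend i
    simpa [Function.comp] using this
  have hz0 : ∀ i, 0 ≤ z i := fun i => (hzmem i (Set.mem_univ i)).1
  -- some coordinate of z is zero
  have hzero : ∃ i, z i = 0 := by
    by_contra hno
    push_neg at hno
    have hzpos : ∀ i, 0 < z i := fun i => (hz0 i).lt_of_ne' (hno i)
    obtain ⟨i₀, -, hieq⟩ := Finset.exists_mem_eq_inf' Finset.univ_nonempty z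
    have hcpos : 0 < Finset.univ.inf' Finset.univ_nonempty z := hieq ▸ hzpos i₀
    set c := Finset.univ.inf' Finset.univ_nonempty z with hc
    have h1 : ∀ᶠ j in atTop, ∀ i, c / 2 < x (tn (φ j)) i := by
      rw [eventually_all]
      intro i
      exact (hp_i i).eventually_const_lt
        (lt_of_lt_of_le (half_lt_self hcpos) (Finset.inf'_le z (Finset.mem_univ i)))
    have h2 : Tendsto (fun j => ⨅ i, x (tn (φ j)) i) atTop (nhds 0) := by
      have := hdist.comp (htnTop.comp hφ.tendsto_atTop)
      exact this
    have h3 : ∀ᶠ j in atTop, (⨅ i, x (tn (φ j)) i) < c / 2 :=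
      h2.eventually_lt_const (half_pos hcpos)
    obtain ⟨j, hj1, hj2⟩ := (h1.and h3).exists
    exact absurd (le_ciInf fun i => (hj1 i).le) (not_le.mpr hj2)
  set W : Finset (Fin N) := Finset.univ.filter (fun i => z i = 0) with hWdef
  have hWmem : ∀ i, i ∈ W ↔ z i = 0 := by intro i; simp [hWdef]
  obtain ⟨i₀, hzi₀⟩ := hzero
  have hi₀W : i₀ ∈ W := (hWmem i₀).mpr hzi₀
  -- logs
  have hθW : ∀ i ∈ W, Tendsto (fun j => Real.log (x (tn (φ j)) i)) atTop atBot := by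
    intro i hi
    have h0 : Tendsto (fun j => x (tn (φ j)) i) atTop (nhdsWithin 0 (Set.Ioi 0)) := by
      rw [tendsto_nhdsWithin_iff]
      exact ⟨(hWmem i).mp hi ▸ hp_i i, Filter.Eventually.of_forall fun j => hqpos (φ j) i⟩
    exact Real.tendsto_log_nhdsGT_zero.comp h0
  have hθnW : ∀ i, i ∉ W → Tendsto (fun j => Real.log (x (tn (φ j)) i)) atTop
      (nhds (Real.log (z i))) := fun i hi => (hp_i i).log (fun h => hi ((hWmem i).mpr h))
  set m : ℕ → ℝ := fun j => ∑ i ∈ W, -Real.log (x (tn (φ j)) i) with hmdef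
  have hE : ∀ᶠ j in atTop, ∀ i ∈ W, Real.log (x (tn (φ j)) i) ≤ -1 := by
    rw [eventually_all_finset]
    intro i hi
    exact (hθW i hi).eventually_le_atBot _
  have hEm : ∀ᶠ j in atTop, 1 ≤ m j ∧ ∀ i ∈ W, -Real.log (x (tn (φ j)) i) ≤ m j := by
    filter_upwards [hE] with j hj
    have hterm : ∀ i ∈ W, (0:ℝ) ≤ -Real.log (x (tn (φ j)) i) := fun i hi => by linarith [hj i hi]
    constructor
    · calc (1:ℝ) ≤ -Real.log (x (tn (φ j)) i₀) := by linarith [hj i₀ hi₀W]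
        _ ≤ m j := Finset.single_le_sum hterm hi₀W
    · intro i hi; exact Finset.single_le_sum hterm hi
  have hmTop : Tendsto m atTop atTop := by
    apply tendsto_atTop_mono' atTop (f₁ := fun j => -Real.log (x (tn (φ j)) i₀))
    · filter_upwards [hEm] with j hj using hj.2 i₀ hi₀W
    · exact tendsto_neg_atBot_atTop.comp (hθW i₀ hi₀W)
  have hminv : Tendsto (fun j => (m j)⁻¹) atTop (nhds 0) := tendsto_inv_atTop_zero.comp hmTop
  -- normalized log vectors
  set v : ℕ → Fin N → ℝ := fun j i =>
    if z i = 0 then max (-1) (min 0 (Real.log (x (tn (φ j)) i) / m j)) else 0 with hvdef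
  have hvmem : ∀ j, v j ∈ Set.pi Set.univ (fun _ : Fin N => Set.Icc (-1:ℝ) 0) := by
    intro j i _
    simp only [hvdef]
    split_ifs with h
    · exact ⟨le_max_left _ _, max_le (by norm_num) (min_le_left _ _)⟩
    · exact ⟨by norm_num, le_refl 0⟩
  obtain ⟨u, humem, ψ, hψ, hψtend⟩ :=
    (isCompact_univ_pi fun _ : Fin N => isCompact_Icc).tendsto_subseq hvmem
  have hu_i : ∀ i, Tendsto (fun j => v (ψ j) i) atTop (nhds (u i)) := by
    intro i
    have := tendsto_pi_nhds.mp hψtend i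
    simpa [Function.comp] using this
  have hu_le : ∀ i, u i ≤ 0 := fun i => (humem i (Set.mem_univ i)).2
  have hu_nW : ∀ i, i ∉ W → u i = 0 := by
    intro i hi
    have hzne : ¬ z i = 0 := fun h => hi ((hWmem i).mpr h)
    have hv0 : (fun j => v (ψ j) i) = fun _ => (0:ℝ) := by
      funext j; simp [hvdef, hzne]
    exact tendsto_nhds_unique (hu_i i) (by rw [hv0]; exact tendsto_const_nhds)
  have hvform : ∀ᶠ j in atTop, ∀ i ∈ W, v j i = Real.log (x (tn (φ j)) i) / m j := by
    filter_upwards [hE, hEm] with j hj hm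
    intro i hi
    have hm0 : 0 < m j := lt_of_lt_of_le one_pos hm.1
    have hle0 : Real.log (x (tn (φ j)) i) / m j ≤ 0 :=
      div_nonpos_of_nonpos_of_nonneg (by linarith [hj i hi]) hm0.le
    have hge : (-1:ℝ) ≤ Real.log (x (tn (φ j)) i) / m j := by
      rw [le_div_iff₀ hm0]
      linarith [hm.2 i hi]
    simp [hvdef, (hWmem i).mp hi, min_eq_right hle0, max_eq_right hge]
  have hvnW : ∀ (j : ℕ) (i : Fin N), i ∉ W → v j i = 0 := by
    intro j i hi
    have hzne : ¬ z i = 0 := fun h => hi ((hWmem i).mpr h)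
    simp [hvdef, hzne]
  have hsumv : ∀ᶠ j in atTop, ∑ i, v j i = -1 := by
    filter_upwards [hvform, hEm] with j hvf hm
    have hm0 : m j ≠ 0 := by linarith [hm.1]
    calc ∑ i, v j i = ∑ i ∈ W, v j i :=
          (Finset.sum_subset (Finset.subset_univ W) (fun i _ hi => hvnW j i hi)).symm
      _ = ∑ i ∈ W, Real.log (x (tn (φ j)) i) / m j := Finset.sum_congr rfl fun i hi => hvf i hi
      _ = (∑ i ∈ W, Real.log (x (tn (φ j)) i)) / m j := by rw [Finset.sum_div]
      _ = -1 := by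
          have hsum : ∑ i ∈ W, Real.log (x (tn (φ j)) i) = -m j := by
            rw [hmdef]; rw [← Finset.sum_neg_distrib]; simp
          rw [hsum, neg_div, div_self hm0]
  have husum : ∑ i, u i = -1 := by
    have h1 : Tendsto (fun j => ∑ i, v (ψ j) i) atTop (nhds (∑ i, u i)) :=
      tendsto_finset_sum _ (fun i _ => hu_i i)
    have h2 : Tendsto (fun j => ∑ i, v (ψ j) i) atTop (nhds (-1)) := by
      refine Tendsto.congr' ((hψ.tendsto_atTop.eventually hsumv).mono fun j hj => hj.symm)
        (tendsto_const_nhds : Tendsto (fun _ : ℕ => (-1:ℝ)) atTop (nhds (-1)))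
    exact tendsto_nhds_unique h1 h2
  -- u is orthogonal to all differences of complexes
  have hukey : ∀ y ∈ C, ∀ y' ∈ C, ∑ i, u i * ((y' i : ℝ) - (y i : ℝ)) = 0 := by
    intro y hy y' hy'
    have hglim : Tendsto (fun j => ∑ i, v (ψ j) i * ((y' i : ℝ) - (y i : ℝ))) atTop
        (nhds (∑ i, u i * ((y' i : ℝ) - (y i : ℝ)))) :=
      tendsto_finset_sum _ (fun i _ => (hu_i i).mul_const _)
    have hg0 : Tendsto (fun j => ∑ i, v j i * ((y' i : ℝ) - (y i : ℝ))) atTop (nhds 0) := by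
      set S : ℕ → ℝ := fun j => ∑ i ∈ Finset.univ \ W,
        Real.log (x (tn (φ j)) i) * ((y' i : ℝ) - (y i : ℝ)) with hSdef
      set L : ℕ → ℝ := fun j =>
        Real.log (monom (x (tn (φ j))) y') - Real.log (monom (x (tn (φ j))) y) with hLdef
      have hform : ∀ᶠ j in atTop,
          ∑ i, v j i * ((y' i : ℝ) - (y i : ℝ)) = L j * (m j)⁻¹ - S j * (m j)⁻¹ := by
        filter_upwards [hvform, hEm] with j hvf hm
        have hm0 : m j ≠ 0 := by linarith [hm.1]
        have h1 : ∑ i, v j i * ((y' i : ℝ) - (y i : ℝ))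
            = ∑ i ∈ W, (Real.log (x (tn (φ j)) i) * ((y' i : ℝ) - (y i : ℝ))) / m j := by
          rw [← Finset.sum_subset (Finset.subset_univ W)
            (fun i _ hi => by rw [hvnW j i hi, zero_mul])]
          exact Finset.sum_congr rfl fun i hi => by rw [hvf i hi]; ring
        have hall : ∑ i, Real.log (x (tn (φ j)) i) * ((y' i : ℝ) - (y i : ℝ)) = L j := by
          rw [hLdef]
          simp only []
          rw [hlogmon (φ j) y, hlogmon (φ j) y', ← Finset.sum_sub_distrib]
          exact Finset.sum_congr rfl fun i _ => by ring
        have hsplit : ∑ i ∈ W, Real.log (x (tn (φ j)) i) * ((y' i : ℝ) - (y i : ℝ)) = L j - S j := by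
          have := Finset.sum_sdiff (f := fun i => Real.log (x (tn (φ j)) i) * ((y' i : ℝ) - (y i : ℝ)))
            (Finset.subset_univ W)
          rw [hSdef]
          simp only []
          rw [← hall]
          linarith [this]
        rw [h1, ← Finset.sum_div, hsplit, div_eq_mul_inv, sub_mul]
      have hS : Tendsto S atTop (nhds (∑ i ∈ Finset.univ \ W,
          Real.log (z i) * ((y' i : ℝ) - (y i : ℝ)))) := by
        rw [hSdef]
        exact tendsto_finset_sum _ (fun i hi =>
          (hθnW i (Finset.mem_sdiff.mp hi).2).mul_const _)
      have hS0 : Tendsto (fun j => S j * (m j)⁻¹) atTop (nhds 0) := by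
        have := hS.mul hminv; rwa [mul_zero] at this
      have hL0 : Tendsto (fun j => L j * (m j)⁻¹) atTop (nhds 0) := by
        rw [tendsto_zero_iff_abs_tendsto_zero]
        apply squeeze_zero' (g := fun j => Real.log MM * (m j)⁻¹)
          (Filter.Eventually.of_forall fun j => abs_nonneg _)
        · filter_upwards [hEm] with j hm
          have hm0 : 0 < m j := lt_of_lt_of_le one_pos hm.1
          have habs : |L j| ≤ Real.log MM := by rw [hLdef]; exact hlog y hy y' hy' (φ j)
          calc |(L j * (m j)⁻¹)| = |L j| * |(m j)⁻¹| := abs_mul _ _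
            _ = |L j| * (m j)⁻¹ := by rw [abs_inv, abs_of_pos hm0]
            _ ≤ Real.log MM * (m j)⁻¹ :=
                mul_le_mul_of_nonneg_right habs (inv_nonneg.mpr hm0.le)
        · have h := (tendsto_const_nhds :
              Tendsto (fun _ : ℕ => Real.log MM) atTop (nhds (Real.log MM))).mul hminv
          rwa [mul_zero] at h
      have hlim : Tendsto (fun j => L j * (m j)⁻¹ - S j * (m j)⁻¹) atTop (nhds 0) := by
        have := hL0.sub hS0; rwa [sub_zero] at this
      exact Tendsto.congr' (hform.mono fun j hj => hj.symm) hlim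
    have hgψ : Tendsto (fun j => ∑ i, v (ψ j) i * ((y' i : ℝ) - (y i : ℝ))) atTop (nhds 0) := by
      have := hg0.comp hψ.tendsto_atTop
      exact this
    exact tendsto_nhds_unique hglim hgψ
  -- conservation law
  have hucv : ∀ r ∈ R, (∑ i, u i * ((cv r.2 - cv r.1) i)) = 0 := by
    intro r hr
    obtain ⟨h1, h2, -⟩ := hnet.1 r hr
    have := hukey r.1 h1 r.2 h2
    simpa [cv] using this
  have hfderiv : ∀ t : ℝ, 0 ≤ t → HasDerivAt (fun s => ∑ i, u i * x s i) 0 t := by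
    intro t ht
    have hcoord := hasDerivAt_pi.mp (hODE t ht)
    have hsum : HasDerivAt (fun s => ∑ i, u i * x s i)
        (∑ i, u i * (∑ r ∈ R, (κ r t * monom (x t) r.1) • (cv r.2 - cv r.1)) i) t :=
      HasDerivAt.fun_sum fun i _ => (hcoord i).const_mul (u i)
    have hzero' : (∑ i, u i * (∑ r ∈ R, (κ r t * monom (x t) r.1) • (cv r.2 - cv r.1)) i) = 0 := by
      calc ∑ i, u i * (∑ r ∈ R, (κ r t * monom (x t) r.1) • (cv r.2 - cv r.1)) i
          = ∑ i, ∑ r ∈ R, (κ r t * monom (x t) r.1) * (u i * (cv r.2 - cv r.1) i) := by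
            refine Finset.sum_congr rfl fun i _ => ?_
            rw [Finset.sum_apply, Finset.mul_sum]
            exact Finset.sum_congr rfl fun r _ => by rw [Pi.smul_apply, smul_eq_mul]; ring
        _ = ∑ r ∈ R, (κ r t * monom (x t) r.1) * ∑ i, u i * (cv r.2 - cv r.1) i := by
            rw [Finset.sum_comm]
            exact Finset.sum_congr rfl fun r _ => by rw [Finset.mul_sum]
        _ = 0 := Finset.sum_eq_zero fun r hr => by rw [hucv r hr, mul_zero]
    rw [← hzero']
    exact hsum
  have hconst : ∀ n : ℕ, (∑ i, u i * x (tn n) i) = ∑ i, u i * x 0 i := by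
    intro n
    have := constant_of_has_deriv_right_zero (f := fun s => ∑ i, u i * x s i) (a := 0) (b := tn n)
      (fun s hs => ((hfderiv s hs.1).continuousAt).continuousWithinAt)
      (fun s hs => (hfderiv s hs.1).hasDerivWithinAt)
    exact this (tn n) ⟨htn0 n, le_refl _⟩
  -- limits
  have hfin : Tendsto (fun j => ∑ i, u i * x (tn (φ (ψ j))) i) atTop (nhds (∑ i, u i * z i)) := by
    refine tendsto_finset_sum _ fun i _ => ?_
    have := (hp_i i).comp hψ.tendsto_atTop
    exact Tendsto.const_mul _ (by exact this)
  have hzsum : ∑ i, u i * z i = 0 := Finset.sum_eq_zero fun i _ => by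
    by_cases h : z i = 0
    · rw [h, mul_zero]
    · rw [hu_nW i (fun hi => h ((hWmem i).mp hi)), zero_mul]
  have hf0 : (∑ i, u i * x 0 i) = 0 := by
    have h2 : Tendsto (fun j => ∑ i, u i * x (tn (φ (ψ j))) i) atTop
        (nhds (∑ i, u i * x 0 i)) := by
      have heq : (fun j => ∑ i, u i * x (tn (φ (ψ j))) i) = fun _ => ∑ i, u i * x 0 i := by
        funext j; exact hconst (φ (ψ j))
      rw [heq]; exact tendsto_const_nhds
    have h3 := tendsto_nhds_unique h2 hfin
    rw [hzsum] at h3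
    exact h3
  have hneg : (∑ i, u i * x 0 i) < 0 := by
    have hex : ∃ i, u i < 0 := by
      by_contra hno
      push_neg at hno
      have : (0:ℝ) ≤ ∑ i, u i := Finset.sum_nonneg fun i _ => hno i
      rw [husum] at this; linarith
    obtain ⟨i₁, hi₁⟩ := hex
    have hlt : (∑ i, u i * x 0 i) < ∑ _i : Fin N, (0:ℝ) :=
      Finset.sum_lt_sum (fun i _ => by nlinarith [hu_le i, (hpos 0 le_rfl i).le])
        ⟨i₁, Finset.mem_univ i₁, mul_neg_of_neg_of_pos hi₁ (hpos 0 le_rfl i₁)⟩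
    simpa using hlt
  linarith
end
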